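/- arXiv:2505.11103 — 2 statements merged into one kernel-verified Lean document; each statement's English description precedes it below -/
import Mathlib

section
/- Let Q̃ be the 3×3 real symmetric matrix with Q̃₁₁ = k²(μe+μc)/ρ, Q̃₂₂ = (k²·μe·Lc²·(2α₁+α₃) + 4μc)/(ρ·j·μe·τc²), Q̃₃₃ = (k²·μe·Lc²·(α₁+α₂) + 4μc)/(ρ·j·μe·τc²), Q̃₁₃ = Q̃₃₁ = −2k·μc/(ρ·√(j·μe·τc²)), and all other entries zero. If ρ>0, j>0, τc>0, Lc>0, k>0 and μe>0, μc>0, α₁+α₂>0, 2α₁+α₃>0, then all eigenvalues of Q̃ are real and strictly positive. -/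
open Matrix

set_option maxHeartbeats 1000000

theorem cosserat_acoustic_tensor_eigenvalues_pos
    (ρ j τc Lc k μe μc α₁ α₂ α₃ : ℝ)
    (hρ : 0 < ρ) (hj : 0 < j) (hτc : 0 < τc) (hLc : 0 < Lc) (hk : 0 < k)
    (hμe : 0 < μe) (hμc : 0 < μc) (h12 : 0 < α₁ + α₂) (h13 : 0 < 2*α₁ + α₃) :
    ∃ hQ : (!![k^2*(μe+μc)/ρ, 0, -2*k*μc/(ρ*Real.sqrt (j*μe*τc^2));
               0, (k^2*μe*Lc^2*(2*α₁+α₃) + 4*μc)/(ρ*j*μe*τc^2), 0;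
               -2*k*μc/(ρ*Real.sqrt (j*μe*τc^2)), 0,
               (k^2*μe*Lc^2*(α₁+α₂) + 4*μc)/(ρ*j*μe*τc^2)] :
               Matrix (Fin 3) (Fin 3) ℝ).IsHermitian,
      ∀ i, 0 < hQ.eigenvalues i := by
  set s := Real.sqrt (j*μe*τc^2) with hs
  have hjmt : (0:ℝ) < j*μe*τc^2 := by positivity
  have hs2 : s^2 = j*μe*τc^2 := Real.sq_sqrt hjmt.le
  have hspos : 0 < s := Real.sqrt_pos.mpr hjmt
  set A := k^2*(μe+μc)/ρ with hA
  set D := (k^2*μe*Lc^2*(2*α₁+α₃) + 4*μc)/(ρ*j*μe*τc^2) with hD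
  set C := (k^2*μe*Lc^2*(α₁+α₂) + 4*μc)/(ρ*j*μe*τc^2) with hC
  set B := -2*k*μc/(ρ*s) with hB
  have hApos : 0 < A := by positivity
  have hDpos : 0 < D := by positivity
  have hB2 : B^2 = 4*k^2*μc^2/(ρ^2*(j*μe*τc^2)) := by
    rw [hB, div_pow, show ((ρ*s)^2 : ℝ) = ρ^2*(j*μe*τc^2) by rw [mul_pow, hs2]]
    ring
  have hdet : 0 < A*C - B^2 := by
    have heq : A*C - B^2
        = k^2*((μe+μc)*(k^2*μe*Lc^2*(α₁+α₂)+4*μc) - 4*μc^2) / (ρ^2*(j*μe*τc^2)) := by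
      rw [hA, hC, hB2]
      field_simp
    rw [heq]
    apply div_pos _ (by positivity)
    apply mul_pos (by positivity)
    have h1 : 0 < (μe+μc)*(k^2*μe*Lc^2*(α₁+α₂)) := by positivity
    nlinarith [mul_pos hμe hμc]
  have key' : ∀ u v : ℝ, u ≠ 0 ∨ v ≠ 0 → 0 < A*u^2 + 2*B*u*v + C*v^2 := by
    intro u v h
    rcases eq_or_ne v 0 with rfl | hv
    · have hu := h.resolve_right (by simp)
      have hu2 : 0 < u^2 := by positivity
      nlinarith
    · have hv2 : 0 < v^2 := by positivity
      nlinarith [sq_nonneg (A*u + B*v), mul_pos hdet hv2, hApos]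
  have key0 : ∀ u v : ℝ, 0 ≤ A*u^2 + 2*B*u*v + C*v^2 := by
    intro u v
    rcases eq_or_ne u 0 with rfl | hu
    · rcases eq_or_ne v 0 with rfl | hv
      · simp
      · exact (key' 0 v (Or.inr hv)).le
    · exact (key' u v (Or.inl hu)).le
  have hPD : (!![A, 0, B; 0, D, 0; B, 0, C] : Matrix (Fin 3) (Fin 3) ℝ).PosDef := by
    refine Matrix.PosDef.of_dotProduct_mulVec_pos ?_ ?_
    · ext i i'
      fin_cases i <;> fin_cases i' <;> simp [Matrix.conjTranspose_apply]
    · intro x hx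
      have hxsum : x 0 ≠ 0 ∨ x 1 ≠ 0 ∨ x 2 ≠ 0 := by
        by_contra h
        push_neg at h
        apply hx
        ext i
        fin_cases i <;> simp [h.1, h.2.1, h.2.2]
      have hexp : (star x) ⬝ᵥ ((!![A, 0, B; 0, D, 0; B, 0, C] : Matrix (Fin 3) (Fin 3) ℝ) *ᵥ x)
          = (A * (x 0)^2 + 2*B*(x 0)*(x 2) + C*(x 2)^2) + D*(x 1)^2 := by
        simp [Matrix.mulVec, dotProduct, Fin.sum_univ_three]
        ring
      rw [hexp]
      rcases hxsum with h0 | h1 | h2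
      · have := key' (x 0) (x 2) (Or.inl h0)
        linarith [mul_nonneg hDpos.le (sq_nonneg (x 1))]
      · have h1' : 0 < (x 1)^2 := by positivity
        linarith [key0 (x 0) (x 2), mul_pos hDpos h1']
      · have := key' (x 0) (x 2) (Or.inr h2)
        linarith [mul_nonneg hDpos.le (sq_nonneg (x 1))]
  exact ⟨hPD.1, fun i => hPD.eigenvalues_pos i⟩
end

section
/- If M: [a,b] → Hermitian n×n matrices is differentiable with M'(v) negative definite for all v, then each eigenvalue function λ_j(v) (ordered increasingly) is strictly decreasing on [a,b]. -/
open Matrix Set ComplexOrder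

lemma quad_repr {n : ℕ} {A : Matrix (Fin n) (Fin n) ℂ} (hA : A.IsHermitian) (x : Fin n → ℂ) :
    star x ⬝ᵥ (A *ᵥ x) =
      (↑(∑ i, hA.eigenvalues i * ‖((star (hA.eigenvectorUnitary : Matrix (Fin n) (Fin n) ℂ)) *ᵥ x) i‖ ^ 2) : ℂ) := by
  set U := (hA.eigenvectorUnitary : Matrix (Fin n) (Fin n) ℂ) with hU
  set y := star U *ᵥ x with hy
  have h1 : star x ⬝ᵥ (A *ᵥ x) = star y ⬝ᵥ (diagonal (RCLike.ofReal ∘ hA.eigenvalues) *ᵥ y) := by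
    conv_lhs => rw [hA.spectral_theorem, Unitary.conjStarAlgAut_apply]
    rw [← hU, ← mulVec_mulVec, ← mulVec_mulVec, dotProduct_mulVec, hy, star_mulVec,
      star_eq_conjTranspose, conjTranspose_conjTranspose, ← dotProduct_mulVec]
  rw [h1]
  simp only [dotProduct, mulVec_diagonal, Pi.star_apply, Function.comp_apply, RCLike.star_def]
  push_cast
  refine Finset.sum_congr rfl fun i _ => ?_
  rw [mul_left_comm, RCLike.conj_mul]
  norm_cast

lemma norm_repr {n : ℕ} {A : Matrix (Fin n) (Fin n) ℂ} (hA : A.IsHermitian) (x : Fin n → ℂ) :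
    ∑ i, ‖((star (hA.eigenvectorUnitary : Matrix (Fin n) (Fin n) ℂ)) *ᵥ x) i‖ ^ 2
      = ∑ i, ‖x i‖ ^ 2 := by
  set U := (hA.eigenvectorUnitary : Matrix (Fin n) (Fin n) ℂ) with hU
  set y := star U *ᵥ x with hy
  have h1 : star y ⬝ᵥ y = star x ⬝ᵥ x := by
    rw [hy, star_mulVec, star_eq_conjTranspose, conjTranspose_conjTranspose,
      ← dotProduct_mulVec, mulVec_mulVec, ← star_eq_conjTranspose,
      (Matrix.mem_unitaryGroup_iff).mp hA.eigenvectorUnitary.2, one_mulVec]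
  have h2 : ∀ w : Fin n → ℂ, star w ⬝ᵥ w = (↑(∑ i, ‖w i‖ ^ 2) : ℂ) := by
    intro w
    simp only [dotProduct, Pi.star_apply, RCLike.star_def]
    push_cast
    refine Finset.sum_congr rfl fun i _ => ?_
    rw [RCLike.conj_mul]
    norm_cast
  rw [h2, h2] at h1
  exact_mod_cast h1

lemma eig_lt {n : ℕ} {A C : Matrix (Fin n) (Fin n) ℂ} (hA : A.IsHermitian) (hC : C.IsHermitian)
    (hpos : (A - C).PosDef) {lA lC : Fin n → ℝ} (hmA : Monotone lA) (hmC : Monotone lC)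
    (σA σC : Equiv.Perm (Fin n)) (heA : ∀ i, lA i = hA.eigenvalues (σA i))
    (heC : ∀ i, lC i = hC.eigenvalues (σC i)) (j : Fin n) : lC j < lA j := by
  by_contra hcon
  push_neg at hcon  -- lA j ≤ lC j
  set U := (hA.eigenvectorUnitary : Matrix (Fin n) (Fin n) ℂ) with hU
  set V := (hC.eigenvectorUnitary : Matrix (Fin n) (Fin n) ℂ) with hV
  classical
  let φ : (Fin n → ℂ) →ₗ[ℂ] ({i : Fin n // i ≠ j} → ℂ) :=
    LinearMap.pi (fun i => if j < (i : Fin n)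
      then (LinearMap.proj (σA i)).comp (Matrix.mulVecLin (star U))
      else (LinearMap.proj (σC i)).comp (Matrix.mulVecLin (star V)))
  have hcard : Fintype.card {i : Fin n // i ≠ j} = n - 1 := by
    rw [Fintype.card_subtype_compl, Fintype.card_subtype_eq, Fintype.card_fin]
  have hninj : ¬ Function.Injective φ := by
    intro hinj
    have hle := LinearMap.finrank_le_finrank_of_injective hinj
    rw [Module.finrank_fintype_fun_eq_card, Module.finrank_fintype_fun_eq_card,
      Fintype.card_fin, hcard] at hle
    have hn : 0 < n := j.pos
    omega
  rw [← LinearMap.ker_eq_bot] at hninj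
  obtain ⟨x, hxker, hx0⟩ := Submodule.exists_mem_ne_zero_of_ne_bot hninj
  set y := star U *ᵥ x with hy
  set z := star V *ᵥ x with hz
  have hyz : ∀ i : {i : Fin n // i ≠ j}, φ x i = 0 := fun i => by
    rw [LinearMap.mem_ker] at hxker; exact congrFun hxker i
  have hyzero : ∀ i : Fin n, j < i → y (σA i) = 0 := by
    intro i hi
    have := hyz ⟨i, ne_of_gt hi⟩
    simpa [φ, LinearMap.pi_apply, hi] using this
  have hzzero : ∀ i : Fin n, i < j → z (σC i) = 0 := by
    intro i hi
    have := hyz ⟨i, hi.ne⟩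
    simpa [φ, LinearMap.pi_apply, not_lt.mpr hi.le] using this
  set N := ∑ i, ‖x i‖ ^ 2 with hN
  have hNpos : 0 < N := by
    obtain ⟨i, hi⟩ := Function.ne_iff.mp hx0
    exact Finset.sum_pos' (fun i _ => by positivity)
      ⟨i, Finset.mem_univ i, pow_pos (norm_pos_iff.mpr hi) 2⟩
  have hrA : ∑ i, hA.eigenvalues i * ‖y i‖ ^ 2 ≤ lA j * N := by
    have e1 : ∑ i, hA.eigenvalues i * ‖y i‖ ^ 2 = ∑ i, lA i * ‖y (σA i)‖ ^ 2 := by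
      rw [← Equiv.sum_comp σA (fun i => hA.eigenvalues i * ‖y i‖ ^ 2)]
      exact Finset.sum_congr rfl fun i _ => by rw [heA]
    have e2 : lA j * N = ∑ i, lA j * ‖y (σA i)‖ ^ 2 := by
      rw [hN, ← norm_repr hA x, ← hU, ← hy, ← Equiv.sum_comp σA (fun i => ‖y i‖ ^ 2),
        Finset.mul_sum]
    rw [e1, e2]
    refine Finset.sum_le_sum fun i _ => ?_
    rcases le_or_gt i j with h | h
    · exact mul_le_mul_of_nonneg_right (hmA h) (by positivity)
    · rw [hyzero i h]; simp
  have hrC : lC j * N ≤ ∑ i, hC.eigenvalues i * ‖z i‖ ^ 2 := by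
    have e1 : ∑ i, hC.eigenvalues i * ‖z i‖ ^ 2 = ∑ i, lC i * ‖z (σC i)‖ ^ 2 := by
      rw [← Equiv.sum_comp σC (fun i => hC.eigenvalues i * ‖z i‖ ^ 2)]
      exact Finset.sum_congr rfl fun i _ => by rw [heC]
    have e2 : lC j * N = ∑ i, lC j * ‖z (σC i)‖ ^ 2 := by
      rw [hN, ← norm_repr hC x, ← hV, ← hz, ← Equiv.sum_comp σC (fun i => ‖z i‖ ^ 2),
        Finset.mul_sum]
    rw [e1, e2]
    refine Finset.sum_le_sum fun i _ => ?_
    rcases le_or_gt j i with h | h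
    · exact mul_le_mul_of_nonneg_right (hmC h) (by positivity)
    · rw [hzzero i h]; simp
  have hq := hpos.dotProduct_mulVec_pos hx0
  rw [sub_mulVec, dotProduct_sub, quad_repr hA, quad_repr hC, ← hU, ← hV, ← hy, ← hz,
    ← Complex.ofReal_sub] at hq
  rw [Complex.zero_lt_real] at hq
  have : lA j * N ≤ lC j * N := mul_le_mul_of_nonneg_right hcon hNpos.le
  linarith

theorem eigenvalues_strictAnti_of_deriv_negdef (n : ℕ) (a b : ℝ) (hab : a < b)
    (M M' : ℝ → Matrix (Fin n) (Fin n) ℂ)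
    (hherm : ∀ v, v ∈ Icc a b → (M v).IsHermitian)
    (hderiv : ∀ v ∈ Icc a b, ∀ i j, HasDerivAt (fun w => M w i j) (M' v i j) v)
    (hneg : ∀ v ∈ Icc a b, (-(M' v)).PosDef)
    (lam : ℝ → Fin n → ℝ)
    (hlam : ∀ (v : ℝ) (hv : v ∈ Icc a b), Monotone (lam v) ∧
      ∃ σ : Equiv.Perm (Fin n), ∀ i, lam v i = (hherm v hv).eigenvalues (σ i)) :
    ∀ j : Fin n, StrictAntiOn (fun v => lam v j) (Icc a b) := by
  intro j v₁ hv₁ v₂ hv₂ hlt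
  have hposd : (M v₁ - M v₂).PosDef := by
    refine Matrix.PosDef.of_dotProduct_mulVec_pos ((hherm v₁ hv₁).sub (hherm v₂ hv₂)) fun w hw => ?_
    have hg : ∀ v ∈ Icc a b,
        HasDerivAt (fun v => star w ⬝ᵥ (M v *ᵥ w)) (star w ⬝ᵥ (M' v *ᵥ w)) v := by
      intro v hv
      have hrw : ∀ B : Matrix (Fin n) (Fin n) ℂ,
          star w ⬝ᵥ (B *ᵥ w) = ∑ i, ∑ k, star (w i) * (B i k * w k) := by
        intro B; simp [dotProduct, mulVec, Finset.mul_sum]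
      simp only [hrw]
      exact HasDerivAt.fun_sum fun i _ => HasDerivAt.fun_sum fun k _ =>
        ((hderiv v hv i k).mul_const (w k)).const_mul (star (w i))
    set f : ℝ → ℝ := fun v => (star w ⬝ᵥ (M v *ᵥ w)).re with hf_def
    have hf : ∀ v ∈ Icc a b, HasDerivAt f ((star w ⬝ᵥ (M' v *ᵥ w)).re) v := fun v hv =>
      Complex.reCLM.hasFDerivAt.comp_hasDerivAt v (hg v hv)
    have hanti : StrictAntiOn f (Icc a b) := by
      apply strictAntiOn_of_deriv_neg (convex_Icc a b)
      · exact fun v hv => (hf v hv).continuousAt.continuousWithinAt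
      · intro v hv
        rw [interior_Icc] at hv
        have hv' : v ∈ Icc a b := Ioo_subset_Icc_self hv
        rw [(hf v hv').deriv]
        have h2 := (hneg v hv').dotProduct_mulVec_pos hw
        rw [neg_mulVec, dotProduct_neg, Complex.lt_def] at h2
        simp only [Complex.zero_re, Complex.neg_re] at h2
        linarith [h2.1]
    have hlt2 := hanti hv₁ hv₂ hlt
    have him : ∀ v ∈ Icc a b, (star w ⬝ᵥ (M v *ᵥ w)).im = 0 := by
      intro v hv
      have hz : star (star w ⬝ᵥ (M v *ᵥ w)) = star w ⬝ᵥ (M v *ᵥ w) := by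
        conv_rhs => rw [star_dotProduct]
        congr 1
        rw [star_mulVec, (hherm v hv).eq, ← dotProduct_mulVec]
      have := congrArg Complex.im hz
      simpa [Complex.conj_im] using this.symm ▸ (by
        have : (starRingEnd ℂ) (star w ⬝ᵥ (M v *ᵥ w)) = star w ⬝ᵥ (M v *ᵥ w) := hz
        have h3 := congrArg Complex.im this
        simp only [Complex.conj_im] at h3
        linarith)
    rw [Complex.lt_def]
    constructor
    · simp only [Complex.zero_re, sub_mulVec, dotProduct_sub, Complex.sub_re]
      simp only [hf_def] at hlt2
      linarith
    · simp only [Complex.zero_im, sub_mulVec, dotProduct_sub, Complex.sub_im,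
        him v₁ hv₁, him v₂ hv₂, sub_zero]
  obtain ⟨hm1, σ1, hs1⟩ := hlam v₁ hv₁
  obtain ⟨hm2, σ2, hs2⟩ := hlam v₂ hv₂
  exact eig_lt (hherm v₁ hv₁) (hherm v₂ hv₂) hposd hm1 hm2 σ1 σ2 hs1 hs2 j
end
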